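/- Let p be a probability density on S that is positive μ-almost everywhere. For θ ∈ (0,1), the normalizer Z_θ = ∫ p(x)^θ dμ(x) is finite and positive; define the tempered density p_θ(x) = p(x)^θ / Z_θ, and write Var_{p_θ}[log p] = ∫ p_θ (log p)² dμ − (∫ p_θ log p dμ)², which is finite for every θ ∈ (0,1). Then the function θ ↦ H(p_θ) is differentiable on (0,1) and its derivative at θ equals −θ · Var_{p_θ}[log p]. -/

import Mathlib

open MeasureTheory Real Filter

private lemma aux_int_rpow {S : Type*} [MeasurableSpace S] {μ : Measure S} [IsFiniteMeasure μ]
    {p : S → ℝ} (hpmeas : Measurable p) (hp0 : ∀ x, 0 ≤ p x) (hpint : Integrable p μ)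
    {s : ℝ} (hs0 : 0 ≤ s) (hs1 : s ≤ 1) :
    Integrable (fun x => p x ^ s) μ := by
  refine (hpint.add (integrable_const 1)).mono' ?_ ?_
  · exact ((by fun_prop : Measurable fun x => p x ^ s)).aestronglyMeasurable
  · filter_upwards with x
    simp only [Pi.add_apply]
    rw [Real.norm_eq_abs, abs_of_nonneg (Real.rpow_nonneg (hp0 x) s)]
    rcases le_total (p x) 1 with h | h
    · have := Real.rpow_le_one (hp0 x) h hs0
      linarith [hp0 x]
    · have h2 : p x ^ s ≤ p x ^ (1:ℝ) := Real.rpow_le_rpow_of_exponent_le h hs1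
      rw [Real.rpow_one] at h2; linarith

private lemma aux_log_le {x s : ℝ} (hx : 0 < x) (hs : 0 < s) : Real.log x ≤ x ^ s / s := by
  have h1 : Real.log (x ^ s) ≤ x ^ s - 1 := Real.log_le_sub_one_of_pos (Real.rpow_pos_of_pos hx s)
  rw [Real.log_rpow hx] at h1
  rw [le_div_iff₀ hs]
  nlinarith

private lemma aux_abs_log_le {x s : ℝ} (hx : 0 < x) (hs : 0 < s) :
    |Real.log x| ≤ (x ^ s + x ^ (-s)) / s := by
  have h1 := aux_log_le hx hs
  have h2 := aux_log_le (inv_pos.mpr hx) hs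
  rw [Real.log_inv, Real.inv_rpow hx.le, ← Real.rpow_neg hx.le] at h2
  have q1 : 0 ≤ x ^ s / s := div_nonneg (Real.rpow_pos_of_pos hx s).le hs.le
  have q2 : 0 ≤ x ^ (-s) / s := div_nonneg (Real.rpow_pos_of_pos hx (-s)).le hs.le
  rw [abs_le, add_div]
  constructor <;> linarith

private lemma aux_rpow_le {x a t b : ℝ} (hx : 0 < x) (hat : a ≤ t) (htb : t ≤ b) :
    x ^ t ≤ x ^ a + x ^ b := by
  rcases le_total x 1 with h | h
  · have : x ^ t ≤ x ^ a := Real.rpow_le_rpow_of_exponent_ge hx h hat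
    linarith [(Real.rpow_pos_of_pos hx b).le]
  · have : x ^ t ≤ x ^ b := Real.rpow_le_rpow_of_exponent_le h htb
    linarith [(Real.rpow_pos_of_pos hx a).le]

private lemma aux_master {u a b ε t : ℝ} (hu : 0 < u) (hε : 0 < ε)
    (hat : a ≤ t) (htb : t ≤ b) :
    u ^ t ≤ 2*(u^a + u^b) + (1/ε^2) * (u^(a+2*ε) + 2*u^a + u^(a-2*ε) + u^(b+2*ε) + 2*u^b + u^(b-2*ε)) ∧
    |u ^ t * Real.log u| ≤ 2*(u^a + u^b) + (1/ε^2) * (u^(a+2*ε) + 2*u^a + u^(a-2*ε) + u^(b+2*ε) + 2*u^b + u^(b-2*ε)) ∧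
    u ^ t * Real.log u ^ 2 ≤ 2*(u^a + u^b) + (1/ε^2) * (u^(a+2*ε) + 2*u^a + u^(a-2*ε) + u^(b+2*ε) + 2*u^b + u^(b-2*ε)) := by
  set L := Real.log u with hLdef
  have h1 : u ^ t ≤ u ^ a + u ^ b := aux_rpow_le hu hat htb
  have hL : |L| ≤ (u ^ ε + u ^ (-ε)) / ε := aux_abs_log_le hu hε
  have e0 : u ^ ε * u ^ (-ε) = 1 := by
    rw [← Real.rpow_add hu]; simp
  have ea1 : u ^ (a + 2*ε) = u ^ a * (u ^ ε * u ^ ε) := by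
    rw [show a + 2*ε = a + ε + ε by ring, Real.rpow_add hu, Real.rpow_add hu]; ring
  have ea2 : u ^ (a - 2*ε) = u ^ a * (u ^ (-ε) * u ^ (-ε)) := by
    rw [show a - 2*ε = a + (-ε) + (-ε) by ring, Real.rpow_add hu, Real.rpow_add hu]; ring
  have eb1 : u ^ (b + 2*ε) = u ^ b * (u ^ ε * u ^ ε) := by
    rw [show b + 2*ε = b + ε + ε by ring, Real.rpow_add hu, Real.rpow_add hu]; ring
  have eb2 : u ^ (b - 2*ε) = u ^ b * (u ^ (-ε) * u ^ (-ε)) := by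
    rw [show b - 2*ε = b + (-ε) + (-ε) by ring, Real.rpow_add hu, Real.rpow_add hu]; ring
  have pa : (0:ℝ) < u ^ a := Real.rpow_pos_of_pos hu a
  have pb : (0:ℝ) < u ^ b := Real.rpow_pos_of_pos hu b
  have pt : (0:ℝ) < u ^ t := Real.rpow_pos_of_pos hu t
  have pe : (0:ℝ) < u ^ ε := Real.rpow_pos_of_pos hu ε
  have pne : (0:ℝ) < u ^ (-ε) := Real.rpow_pos_of_pos hu (-ε)
  have hL2 : L ^ 2 ≤ ((u ^ ε + u ^ (-ε)) / ε) ^ 2 := by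
    have := pow_le_pow_left₀ (abs_nonneg L) hL 2
    rwa [sq_abs] at this
  have hexp : ((u ^ ε + u ^ (-ε)) / ε) ^ 2
      = (1/ε^2) * (u ^ ε * u ^ ε + 2 + u ^ (-ε) * u ^ (-ε)) := by
    rw [div_pow]
    field_simp
    linear_combination (2:ℝ) * e0
  have key : (u^a + u^b) * L ^ 2
      ≤ (1/ε^2) * (u^(a+2*ε) + 2*u^a + u^(a-2*ε) + u^(b+2*ε) + 2*u^b + u^(b-2*ε)) := by
    rw [ea1, ea2, eb1, eb2]
    calc (u^a + u^b) * L ^ 2 ≤ (u^a + u^b) * ((u ^ ε + u ^ (-ε)) / ε) ^ 2 := by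
          apply mul_le_mul_of_nonneg_left hL2 (by positivity)
      _ = (1/ε^2) * (u ^ a * (u ^ ε * u ^ ε) + 2*u^a + u ^ a * (u ^ (-ε) * u ^ (-ε))
            + u ^ b * (u ^ ε * u ^ ε) + 2*u^b + u ^ b * (u ^ (-ε) * u ^ (-ε))) := by
          rw [hexp]; ring
  have m1 : u ^ t * L ^ 2 ≤ (u^a + u^b) * L ^ 2 :=
    mul_le_mul_of_nonneg_right h1 (sq_nonneg L)
  have sn : (0:ℝ) ≤ (1/ε^2) * (u^(a+2*ε) + 2*u^a + u^(a-2*ε) + u^(b+2*ε) + 2*u^b + u^(b-2*ε)) := by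
    positivity
  refine ⟨by linarith, ?_, by linarith⟩
  have habs : |u ^ t * L| = u ^ t * |L| := by rw [abs_mul, abs_of_nonneg pt.le]
  have hL1 : |L| ≤ 1 + L ^ 2 := by nlinarith [sq_abs L, abs_nonneg L]
  have : u ^ t * |L| ≤ u ^ t + u ^ t * L ^ 2 := by nlinarith
  rw [habs]
  linarith
/-- For a positive density `p` on a finite measure space, the tempered densities
`p_θ = p^θ / Z_θ` are well defined for `θ ∈ (0,1)`, the variance `Var_{p_θ}[log p]` is
finite, and the entropy `θ ↦ H(p_θ)` is differentiable on `(0,1)` with derivative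
`−θ·Var_{p_θ}[log p]`. -/
theorem tempered_entropy_deriv
    {S : Type*} [MeasurableSpace S] (μ : Measure S)
    (hμ0 : 0 < μ Set.univ) (hμfin : μ Set.univ < ⊤)
    (p : S → ℝ) (hpmeas : Measurable p) (hp0 : ∀ x, 0 ≤ p x) (hp1 : ∫ x, p x ∂μ = 1)
    (hppos : ∀ᵐ x ∂μ, 0 < p x)
    (Z : ℝ → ℝ) (hZ : Z = fun θ => ∫ x, p x ^ θ ∂μ)
    (pθ : ℝ → S → ℝ) (hpθ : pθ = fun θ x => p x ^ θ / Z θ)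
    (H : (S → ℝ) → ℝ)
    (hH : H = fun r => -∫ x, r x * Real.log (r x) ∂μ) :
    ∀ θ ∈ Set.Ioo (0 : ℝ) 1,
      Integrable (fun x => p x ^ θ) μ ∧ 0 < Z θ ∧
      Integrable (fun x => pθ θ x * Real.log (p x) ^ 2) μ ∧
      HasDerivAt (fun t => H (pθ t))
        (-θ * ((∫ x, pθ θ x * Real.log (p x) ^ 2 ∂μ) -
          (∫ x, pθ θ x * Real.log (p x) ∂μ) ^ 2)) θ := by
  haveI : IsFiniteMeasure μ := ⟨hμfin⟩
  have hpint : Integrable p μ := by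
    by_contra h
    rw [integral_undef h] at hp1
    norm_num at hp1
  -- the master claim for every θ in (0,1)
  have key : ∀ θ ∈ Set.Ioo (0:ℝ) 1,
      Integrable (fun x => p x ^ θ) μ ∧ (0 < ∫ x, p x ^ θ ∂μ) ∧
      Integrable (fun x => p x ^ θ * Real.log (p x)) μ ∧
      Integrable (fun x => p x ^ θ * Real.log (p x) ^ 2) μ ∧
      HasDerivAt (fun t => ∫ x, p x ^ t ∂μ) (∫ x, p x ^ θ * Real.log (p x) ∂μ) θ ∧
      HasDerivAt (fun t => ∫ x, p x ^ t * Real.log (p x) ∂μ)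
        (∫ x, p x ^ θ * Real.log (p x) ^ 2 ∂μ) θ := by
    rintro θ ⟨hθ0, hθ1⟩
    have hm0 : 0 < min θ (1-θ) := lt_min hθ0 (by linarith)
    have hm1 : min θ (1-θ) ≤ θ := min_le_left _ _
    have hm2 : min θ (1-θ) ≤ 1-θ := min_le_right _ _
    set m := min θ (1-θ) with hmdef
    set a := θ/2 with hadef
    set b := (θ+1)/2 with hbdef
    set ε := m / 8 with hεdef
    set δ := m / 2 with hδdef
    have hε : 0 < ε := by positivity
    have hδ : 0 < δ := by positivity
    have hball : ∀ t ∈ Metric.ball θ δ, a ≤ t ∧ t ≤ b := by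
      intro t ht
      rw [Metric.mem_ball, Real.dist_eq, abs_lt] at ht
      constructor <;> [skip; skip] <;> simp only [hadef, hbdef] <;> linarith
    -- integrability of all relevant powers
    have hint : ∀ s : ℝ, 0 ≤ s → s ≤ 1 → Integrable (fun x => p x ^ s) μ :=
      fun s h1 h2 => aux_int_rpow hpmeas hp0 hpint h1 h2
    have hg_int : Integrable (fun x => 2*(p x^a + p x^b) + (1/ε^2) * (p x^(a+2*ε) + 2*p x^a
        + p x^(a-2*ε) + p x^(b+2*ε) + 2*p x^b + p x^(b-2*ε))) μ := by
      refine Integrable.add ?_ ?_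
      · exact ((hint a (by linarith) (by linarith)).add (hint b (by linarith) (by linarith))).const_mul 2
      · refine Integrable.const_mul ?_ _
        exact (((((hint (a+2*ε) (by linarith) (by linarith)).add
          ((hint a (by linarith) (by linarith)).const_mul 2)).add
          (hint (a-2*ε) (by linarith) (by linarith))).add
          (hint (b+2*ε) (by linarith) (by linarith))).add
          ((hint b (by linarith) (by linarith)).const_mul 2)).add
          (hint (b-2*ε) (by linarith) (by linarith))
    have hI1 : Integrable (fun x => p x ^ θ) μ := hint θ hθ0.le hθ1.le
    -- positivity of the normalizer
    have hpos : 0 < ∫ x, p x ^ θ ∂μ := by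
      rw [integral_pos_iff_support_of_nonneg_ae
        (Eventually.of_forall fun x => Real.rpow_nonneg (hp0 x) θ) hI1]
      have hcompl : μ (Function.support fun x => p x ^ θ)ᶜ = 0 := by
        rw [ae_iff] at hppos
        refine measure_mono_null ?_ hppos
        intro x hx
        simp only [Function.mem_support, not_not, Set.mem_compl_iff] at hx ⊢
        intro hpx
        exact (Real.rpow_pos_of_pos hpx θ).ne' hx
      have : μ Set.univ ≤ μ (Function.support fun x => p x ^ θ)
          + μ (Function.support fun x => p x ^ θ)ᶜ := by
        rw [← Set.union_compl_self (Function.support fun x => p x ^ θ)] at hμ0 ⊢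
        exact measure_union_le _ _
      rw [hcompl, add_zero] at this
      exact lt_of_lt_of_le hμ0 this
    -- derivative of Z
    have hmeasF : ∀ t : ℝ, AEStronglyMeasurable (fun x => p x ^ t) μ :=
      fun t => (by fun_prop : Measurable fun x => p x ^ t).aestronglyMeasurable
    have hmeasG : ∀ t : ℝ, AEStronglyMeasurable (fun x => p x ^ t * Real.log (p x)) μ :=
      fun t => ((by fun_prop : Measurable fun x => p x ^ t).mul hpmeas.log).aestronglyMeasurable
    have hmeasK : AEStronglyMeasurable (fun x => p x ^ θ * Real.log (p x) ^ 2) μ :=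
      ((by fun_prop : Measurable fun x => p x ^ θ).mul (hpmeas.log.pow_const 2)).aestronglyMeasurable
    have hA := hasDerivAt_integral_of_dominated_loc_of_deriv_le (μ := μ)
      (F := fun t x => p x ^ t) (F' := fun t x => p x ^ t * Real.log (p x))
      (bound := fun x => 2*(p x^a + p x^b) + (1/ε^2) * (p x^(a+2*ε) + 2*p x^a
        + p x^(a-2*ε) + p x^(b+2*ε) + 2*p x^b + p x^(b-2*ε)))
      (Metric.ball_mem_nhds θ hδ) (Eventually.of_forall hmeasF) hI1 (hmeasG θ)
      (by
        filter_upwards [hppos] with x hx t ht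
        obtain ⟨h1, h2⟩ := hball t ht
        rw [Real.norm_eq_abs]
        exact (aux_master hx hε h1 h2).2.1)
      hg_int
      (by
        filter_upwards [hppos] with x hx t _
        exact (Real.hasStrictDerivAt_const_rpow hx t).hasDerivAt)
    obtain ⟨hGint, hZd⟩ := hA
    have hB := hasDerivAt_integral_of_dominated_loc_of_deriv_le (μ := μ)
      (F := fun t x => p x ^ t * Real.log (p x))
      (F' := fun t x => p x ^ t * Real.log (p x) ^ 2)
      (bound := fun x => 2*(p x^a + p x^b) + (1/ε^2) * (p x^(a+2*ε) + 2*p x^a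
        + p x^(a-2*ε) + p x^(b+2*ε) + 2*p x^b + p x^(b-2*ε)))
      (Metric.ball_mem_nhds θ hδ) (Eventually.of_forall hmeasG) hGint hmeasK
      (by
        filter_upwards [hppos] with x hx t ht
        obtain ⟨h1, h2⟩ := hball t ht
        rw [Real.norm_eq_abs, abs_of_nonneg
          (mul_nonneg (Real.rpow_nonneg (hp0 x) t) (sq_nonneg _))]
        exact (aux_master hx hε h1 h2).2.2)
      hg_int
      (by
        filter_upwards [hppos] with x hx t _
        have := ((Real.hasStrictDerivAt_const_rpow hx t).hasDerivAt).mul_const (Real.log (p x))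
        refine this.congr_deriv ?_
        ring)
    obtain ⟨hKint, hGd⟩ := hB
    exact ⟨hI1, hpos, hGint, hKint, hZd, hGd⟩
  -- now derive the statement
  rintro θ hθ
  obtain ⟨hI1, hpos, hGint, hKint, hZd, hGd⟩ := key θ hθ
  have hZne : (∫ x, p x ^ θ ∂μ) ≠ 0 := ne_of_gt hpos
  subst hZ hpθ hH
  simp only
  refine ⟨hI1, hpos, ?_, ?_⟩
  · refine (hKint.div_const (∫ x, p x ^ θ ∂μ)).congr (Eventually.of_forall fun x => ?_)
    ring
  · -- derivative of the explicit formula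
    have hlog : HasDerivAt (fun t => Real.log (∫ x, p x ^ t ∂μ))
        ((∫ x, p x ^ θ * Real.log (p x) ∂μ) / (∫ x, p x ^ θ ∂μ)) θ := hZd.log hZne
    have hmul : HasDerivAt (fun t => t * ∫ x, p x ^ t * Real.log (p x) ∂μ)
        (1 * (∫ x, p x ^ θ * Real.log (p x) ∂μ)
          + θ * (∫ x, p x ^ θ * Real.log (p x) ^ 2 ∂μ)) θ := (hasDerivAt_id θ).mul hGd
    have hdiv := hmul.div hZd hZne
    have hφ := hlog.sub hdiv
    have hev : (fun t => -∫ x, p x ^ t / (∫ y, p y ^ t ∂μ)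
          * Real.log (p x ^ t / (∫ y, p y ^ t ∂μ)) ∂μ)
        =ᶠ[nhds θ] fun t => Real.log (∫ x, p x ^ t ∂μ)
          - t * (∫ x, p x ^ t * Real.log (p x) ∂μ) / (∫ x, p x ^ t ∂μ) := by
      filter_upwards [isOpen_Ioo.mem_nhds hθ] with t ht
      obtain ⟨hI1t, hpost, hGintt, -, -, -⟩ := key t ht
      have hZtne : (∫ x, p x ^ t ∂μ) ≠ 0 := ne_of_gt hpost
      have hae : (fun x => p x ^ t / (∫ y, p y ^ t ∂μ)
            * Real.log (p x ^ t / (∫ y, p y ^ t ∂μ)))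
          =ᵐ[μ] fun x => (t / (∫ y, p y ^ t ∂μ)) * (p x ^ t * Real.log (p x))
            - (Real.log (∫ y, p y ^ t ∂μ) / (∫ y, p y ^ t ∂μ)) * p x ^ t := by
        filter_upwards [hppos] with x hx
        rw [Real.log_div (ne_of_gt (Real.rpow_pos_of_pos hx t)) hZtne, Real.log_rpow hx]
        ring
      rw [integral_congr_ae hae,
        integral_sub (hGintt.const_mul _) (hI1t.const_mul _),
        integral_const_mul, integral_const_mul]
      field_simp
      ring
    have final := hφ.congr_of_eventuallyEq hev
    refine final.congr_deriv ?_
    have eK : ∫ x, p x ^ θ / (∫ y, p y ^ θ ∂μ) * Real.log (p x) ^ 2 ∂μ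
        = (∫ x, p x ^ θ * Real.log (p x) ^ 2 ∂μ) / (∫ y, p y ^ θ ∂μ) := by
      simp_rw [div_mul_eq_mul_div]
      exact integral_div _ _
    have eG : ∫ x, p x ^ θ / (∫ y, p y ^ θ ∂μ) * Real.log (p x) ∂μ
        = (∫ x, p x ^ θ * Real.log (p x) ∂μ) / (∫ y, p y ^ θ ∂μ) := by
      simp_rw [div_mul_eq_mul_div]
      exact integral_div _ _
    rw [eK, eG]
    field_simp
    ring
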